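/- For all indices i, k, l, j with 0 ≤ i ≤ k < l ≤ j ≤ n−1 and every s with k ≤ s ≤ l, one has dOrth(s,k,l) ≤ dOrth(s,i,j) + max (dOrth(k,i,j)) (dOrth(l,i,j)). (Pointwise triangle-inequality step in the proof of Lemma 5: d(p_s, r_s) ≤ d(p_s, q_s) + d(q_s, r_s) ≤ 2ε.) -/

import Mathlib

/-- The projection value `t s = ⟪p s, u⟫` of the cloud point `p s` onto the direction `u`. -/
noncomputable def projVal {d n : ℕ} (p : Fin n → EuclideanSpace ℝ (Fin d))
    (u : EuclideanSpace ℝ (Fin d)) (s : Fin n) : ℝ :=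
  inner ℝ (p s) u

/-- The point `q(s,i,j)` of the straight segment `[p i, p j]` whose projection
onto `u` equals `t s`. -/
noncomputable def segPoint {d n : ℕ} (p : Fin n → EuclideanSpace ℝ (Fin d))
    (u : EuclideanSpace ℝ (Fin d)) (s i j : Fin n) : EuclideanSpace ℝ (Fin d) :=
  p i + ((projVal p u s - projVal p u i) / (projVal p u j - projVal p u i)) • (p j - p i)

/-- The orthogonal distance `dOrth(s,i,j)` from `p s` to the segment `[p i, p j]`,
measured orthogonally to `u`. -/
noncomputable def dOrth {d n : ℕ} (p : Fin n → EuclideanSpace ℝ (Fin d))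
    (u : EuclideanSpace ℝ (Fin d)) (s i j : Fin n) : ℝ :=
  dist (p s) (segPoint p u s i j)

/-- Pointwise triangle-inequality step in the proof of Lemma 5:
`d(p_s, r_s) ≤ d(p_s, q_s) + d(q_s, r_s) ≤ 2ε`. -/
theorem pointwise_triangle_step {d n : ℕ} (hd : 1 ≤ d) (hn : 2 ≤ n)
    (p : Fin n → EuclideanSpace ℝ (Fin d)) (u : EuclideanSpace ℝ (Fin d))
    (hu : ‖u‖ = 1) (hmono : StrictMono (projVal p u))
    (i k l j : Fin n) (hik : i ≤ k) (hkl : k < l) (hlj : l ≤ j)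
    (s : Fin n) (hks : k ≤ s) (hsl : s ≤ l) :
    dOrth p u s k l ≤ dOrth p u s i j + max (dOrth p u k i j) (dOrth p u l i j) := by
  have hij : i < j := lt_of_le_of_lt hik (lt_of_lt_of_le hkl hlj)
  set t := projVal p u with ht
  have hDkl : t k < t l := hmono hkl
  have hDij : t i < t j := hmono hij
  have hkl' : t l - t k ≠ 0 := sub_ne_zero.2 hDkl.ne'
  have hij' : t j - t i ≠ 0 := sub_ne_zero.2 hDij.ne'
  set μ : ℝ := (t s - t k) / (t l - t k) with hμ
  have hμ0 : 0 ≤ μ := div_nonneg (sub_nonneg.2 (hmono.monotone hks)) (sub_nonneg.2 hDkl.le)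
  have hμ1 : μ ≤ 1 := (div_le_one (sub_pos.2 hDkl)).2 (sub_le_sub_right (hmono.monotone hsl) _)
  have key : segPoint p u s i j - segPoint p u s k l
      = (1 - μ) • (segPoint p u k i j - p k) + μ • (segPoint p u l i j - p l) := by
    have hlam : (t s - t i) / (t j - t i)
        = (t k - t i) / (t j - t i)
          + μ * ((t l - t i) / (t j - t i) - (t k - t i) / (t j - t i)) := by
      rw [hμ]; field_simp; ring
    simp only [segPoint, ← ht, ← hμ, hlam]
    module
  set M : ℝ := max (dOrth p u k i j) (dOrth p u l i j) with hM
  have hq : dist (segPoint p u s i j) (segPoint p u s k l) ≤ M := by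
    rw [dist_eq_norm, key]
    have h1 : ‖segPoint p u k i j - p k‖ ≤ M := by
      rw [← norm_sub_rev, ← dist_eq_norm]; exact le_max_left _ _
    have h2 : ‖segPoint p u l i j - p l‖ ≤ M := by
      rw [← norm_sub_rev, ← dist_eq_norm]; exact le_max_right _ _
    calc ‖(1 - μ) • (segPoint p u k i j - p k) + μ • (segPoint p u l i j - p l)‖
        ≤ (1 - μ) * ‖segPoint p u k i j - p k‖ + μ * ‖segPoint p u l i j - p l‖ := by
          refine (norm_add_le _ _).trans (le_of_eq ?_)
          rw [norm_smul, norm_smul, Real.norm_of_nonneg (by linarith),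
            Real.norm_of_nonneg hμ0]
      _ ≤ (1 - μ) * M + μ * M := by
          have hM0 : 0 ≤ M := le_trans dist_nonneg (le_max_left _ _)
          have h1μ : (0:ℝ) ≤ 1 - μ := by linarith
          gcongr
      _ = M := by ring
  calc dOrth p u s k l
      ≤ dist (p s) (segPoint p u s i j) + dist (segPoint p u s i j) (segPoint p u s k l) :=
        dist_triangle _ _ _
    _ ≤ dOrth p u s i j + M := add_le_add le_rfl hq
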